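/- (Population version of non-parametric consistency of Spatiotemporal Noise-Contrastive Estimation.) Let (Ω, μ) be a σ-finite measure space. Let p_d, p_θ : Ω → ℝ be measurable, strictly positive everywhere, with ∫ p_d dμ = ∫ p_θ dμ = 1. Let p_n : Ω × Ω → ℝ be measurable, strictly positive everywhere, with ∫ p_n(ω, ω′) dμ(ω′) = 1 for every ω ∈ Ω. On the product space (Ω × Ω, μ ⊗ μ), define the class densities p_A(ω, ω′) = p_d(ω) p_n(ω, ω′) and p_B(ω, ω′) = p_d(ω′) p_n(ω′, ω), and define the model classifier F_θ(ω, ω′) = log p_θ(ω) − log p_θ(ω′) + log p_n(ω, ω′) − log p_n(ω′, ω). If the logistic classification loss satisfies L(F_θ) ≤ L(F) for every measurable F : Ω × Ω → ℝ (i.e., F_θ is a population minimizer), then p_θ = p_d μ-almost everywhere. -/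

import Mathlib

open MeasureTheory
open scoped ENNReal

/-- The logistic sigmoid `σ(u) = 1 / (1 + exp (-u))`. -/
noncomputable def sigmoid (u : ℝ) : ℝ := 1 / (1 + Real.exp (-u))

/-- The logistic classification loss
`L(F) = −∫ p_A log σ(F) dμ − ∫ p_B log (1 − σ(F)) dμ`, valued in `[0, ∞]`. -/
noncomputable def logisticLoss {Ω : Type*} [MeasurableSpace Ω] (μ : Measure Ω)
    (pA pB F : Ω → ℝ) : ℝ≥0∞ :=
  (∫⁻ x, ENNReal.ofReal (-(pA x * Real.log (sigmoid (F x)))) ∂μ)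
    + ∫⁻ x, ENNReal.ofReal (-(pB x * Real.log (1 - sigmoid (F x)))) ∂μ

lemma one_add_exp_pos (u : ℝ) : 0 < 1 + Real.exp (-u) := by positivity

lemma sigmoid_pos (u : ℝ) : 0 < sigmoid u := by unfold sigmoid; positivity

lemma sigmoid_lt_one (u : ℝ) : sigmoid u < 1 := by
  unfold sigmoid
  rw [div_lt_one (one_add_exp_pos u)]
  linarith [Real.exp_pos (-u)]

lemma sigmoid_injective : Function.Injective sigmoid := by
  intro u v h
  unfold sigmoid at h
  rw [div_eq_div_iff (one_add_exp_pos u).ne' (one_add_exp_pos v).ne'] at h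
  have h2 : Real.exp (-u) = Real.exp (-v) := by linarith
  have := Real.exp_injective h2
  linarith

lemma sigmoid_log_div (a b : ℝ) (ha : 0 < a) (hb : 0 < b) :
    sigmoid (Real.log a - Real.log b) = a / (a + b) := by
  unfold sigmoid
  rw [neg_sub, ← Real.log_div hb.ne' ha.ne', Real.exp_log (div_pos hb ha)]
  rw [div_eq_div_iff (by positivity) (by positivity)]
  field_simp

lemma one_sub_sigmoid_log_div (a b : ℝ) (ha : 0 < a) (hb : 0 < b) :
    1 - sigmoid (Real.log a - Real.log b) = b / (a + b) := by
  rw [sigmoid_log_div a b ha hb]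
  field_simp
  ring

/-- pointwise loss -/
noncomputable def ell (a b u : ℝ) : ℝ :=
  -(a * Real.log (sigmoid u)) + -(b * Real.log (1 - sigmoid u))

lemma part_nonneg (a q : ℝ) (ha : 0 ≤ a) (h0 : 0 < q) (h1 : q ≤ 1) :
    0 ≤ -(a * Real.log q) := by
  have := Real.log_nonpos h0.le h1
  nlinarith

lemma ell_nonneg (a b u : ℝ) (ha : 0 ≤ a) (hb : 0 ≤ b) : 0 ≤ ell a b u := by
  have h1 := part_nonneg a (sigmoid u) ha (sigmoid_pos u) (sigmoid_lt_one u).le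
  have h2 := part_nonneg b (1 - sigmoid u) hb (by linarith [sigmoid_lt_one u]) (by linarith [sigmoid_pos u])
  unfold ell; linarith

lemma ell_lt (a b u : ℝ) (ha : 0 < a) (hb : 0 < b) (hne : u ≠ Real.log a - Real.log b) :
    ell a b (Real.log a - Real.log b) < ell a b u := by
  have hab : 0 < a + b := by linarith
  have hp0 : (0:ℝ) < a / (a + b) := by positivity
  have hb0 : (0:ℝ) < b / (a + b) := by positivity
  set q := sigmoid u with hqdef
  have hq0 : 0 < q := sigmoid_pos u
  have hq1 : q < 1 := sigmoid_lt_one u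
  have hpq : q ≠ a / (a + b) := by
    intro h
    exact hne (sigmoid_injective (by rw [← hqdef, h, sigmoid_log_div a b ha hb]))
  have h1 : Real.log q - Real.log (a / (a+b)) < q / (a/(a+b)) - 1 := by
    have hne1 : q / (a/(a+b)) ≠ 1 := by
      intro h
      rw [div_eq_one_iff_eq hp0.ne'] at h
      exact hpq h
    have := Real.log_lt_sub_one_of_pos (div_pos hq0 hp0) hne1
    rwa [Real.log_div hq0.ne' hp0.ne'] at this
  have h2 : Real.log (1-q) - Real.log (b / (a+b)) < (1-q) / (b/(a+b)) - 1 := by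
    have hne2 : (1-q)/(b/(a+b)) ≠ 1 := by
      intro h
      rw [div_eq_one_iff_eq hb0.ne'] at h
      apply hpq
      have : q = 1 - b/(a+b) := by linarith
      rw [this]; field_simp; ring
    have := Real.log_lt_sub_one_of_pos (div_pos (by linarith) hb0) hne2
    rwa [Real.log_div (by linarith : (0:ℝ) < 1 - q).ne' hb0.ne'] at this
  -- multiply through
  have e1 : a * (q / (a/(a+b)) - 1) = (a+b) * q - a := by field_simp
  have e2 : b * ((1-q) / (b/(a+b)) - 1) = (a+b) * (1-q) - b := by field_simp
  have m1 : a * (Real.log q - Real.log (a/(a+b))) < (a+b) * q - a := by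
    calc a * (Real.log q - Real.log (a/(a+b))) < a * (q / (a/(a+b)) - 1) :=
          mul_lt_mul_of_pos_left h1 ha
    _ = (a+b) * q - a := e1
  have m2 : b * (Real.log (1-q) - Real.log (b/(a+b))) < (a+b) * (1-q) - b := by
    calc b * (Real.log (1-q) - Real.log (b/(a+b))) < b * ((1-q) / (b/(a+b)) - 1) :=
          mul_lt_mul_of_pos_left h2 hb
    _ = (a+b) * (1-q) - b := e2
  unfold ell
  rw [one_sub_sigmoid_log_div a b ha hb, sigmoid_log_div a b ha hb, ← hqdef]
  nlinarith [m1, m2]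

lemma ell_le (a b u : ℝ) (ha : 0 < a) (hb : 0 < b) :
    ell a b (Real.log a - Real.log b) ≤ ell a b u := by
  rcases eq_or_ne u (Real.log a - Real.log b) with h | h
  · rw [h]
  · exact (ell_lt a b u ha hb h).le

lemma part1_bound (a b : ℝ) (ha : 0 < a) (hb : 0 < b) :
    -(a * Real.log (sigmoid (Real.log a - Real.log b))) ≤ b := by
  rw [sigmoid_log_div a b ha hb]
  have hab : 0 < a + b := by linarith
  have h : Real.log ((a+b)/a) ≤ (a+b)/a - 1 := Real.log_le_sub_one_of_pos (by positivity)
  have e : Real.log (a/(a+b)) = - Real.log ((a+b)/a) := by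
    rw [Real.log_div ha.ne' hab.ne', Real.log_div hab.ne' ha.ne']; ring
  have e2 : a * ((a+b)/a - 1) = b := by field_simp; ring
  nlinarith

lemma part2_bound (a b : ℝ) (ha : 0 < a) (hb : 0 < b) :
    -(b * Real.log (1 - sigmoid (Real.log a - Real.log b))) ≤ a := by
  rw [one_sub_sigmoid_log_div a b ha hb]
  have hab : 0 < a + b := by linarith
  have h : Real.log ((a+b)/b) ≤ (a+b)/b - 1 := Real.log_le_sub_one_of_pos (by positivity)
  have e : Real.log (b/(a+b)) = - Real.log ((a+b)/b) := by
    rw [Real.log_div hb.ne' hab.ne', Real.log_div hab.ne' hb.ne']; ring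
  have e2 : b * ((a+b)/b - 1) = a := by field_simp; ring
  nlinarith

lemma continuous_sigmoid_loc : Continuous sigmoid := by
  unfold sigmoid
  exact continuous_const.div (by continuity) (fun u => (one_add_exp_pos u).ne')


/-- Population version of non-parametric consistency of Spatiotemporal
Noise-Contrastive Estimation: if the model classifier
`F_θ(ω, ω′) = log p_θ(ω) − log p_θ(ω′) + log p_n(ω, ω′) − log p_n(ω′, ω)`
minimizes the logistic loss for classifying
`p_A(ω, ω′) = p_d(ω) p_n(ω, ω′)` against `p_B(ω, ω′) = p_d(ω′) p_n(ω′, ω)`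
over all measurable classifiers, then `p_θ = p_d` μ-almost everywhere. -/
theorem stNCE_nonparametric_consistency
    {Ω : Type*} [MeasurableSpace Ω] (μ : Measure Ω) [SigmaFinite μ]
    (pd pθ : Ω → ℝ) (hpd : Measurable pd) (hpθ : Measurable pθ)
    (hpdpos : ∀ x, 0 < pd x) (hpθpos : ∀ x, 0 < pθ x)
    (hpdint : ∫ x, pd x ∂μ = 1) (hpθint : ∫ x, pθ x ∂μ = 1)
    (pn : Ω × Ω → ℝ) (hpn : Measurable pn)
    (hpnpos : ∀ z, 0 < pn z)
    (hpnint : ∀ ω, ∫ ω', pn (ω, ω') ∂μ = 1)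
    (hopt : ∀ F : Ω × Ω → ℝ, Measurable F →
      logisticLoss (μ.prod μ)
          (fun z => pd z.1 * pn (z.1, z.2))
          (fun z => pd z.2 * pn (z.2, z.1))
          (fun z => Real.log (pθ z.1) - Real.log (pθ z.2)
            + Real.log (pn (z.1, z.2)) - Real.log (pn (z.2, z.1)))
        ≤ logisticLoss (μ.prod μ)
            (fun z => pd z.1 * pn (z.1, z.2))
            (fun z => pd z.2 * pn (z.2, z.1)) F) :
    pθ =ᵐ[μ] pd := by
  classical
  set ν := μ.prod μ with hν
  set A : Ω × Ω → ℝ := fun z => pd z.1 * pn (z.1, z.2) with hAdef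
  set Bf : Ω × Ω → ℝ := fun z => pd z.2 * pn (z.2, z.1) with hBdef
  set Fs : Ω × Ω → ℝ := fun z => Real.log (pd z.1) - Real.log (pd z.2)
      + Real.log (pn (z.1, z.2)) - Real.log (pn (z.2, z.1)) with hFsdef
  set Ft : Ω × Ω → ℝ := fun z => Real.log (pθ z.1) - Real.log (pθ z.2)
      + Real.log (pn (z.1, z.2)) - Real.log (pn (z.2, z.1)) with hFtdef
  have hApos : ∀ z, 0 < A z := fun z => mul_pos (hpdpos _) (hpnpos _)
  have hBpos : ∀ z, 0 < Bf z := fun z => mul_pos (hpdpos _) (hpnpos _)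
  have hFs_eq : ∀ z, Fs z = Real.log (A z) - Real.log (Bf z) := by
    intro z
    simp only [hAdef, hBdef, hFsdef]
    rw [Real.log_mul (hpdpos _).ne' (hpnpos _).ne', Real.log_mul (hpdpos _).ne' (hpnpos _).ne']
    ring
  -- measurability
  have hA : Measurable A :=
    (hpd.comp measurable_fst).mul (hpn.comp (measurable_fst.prodMk measurable_snd))
  have hB : Measurable Bf :=
    (hpd.comp measurable_snd).mul (hpn.comp (measurable_snd.prodMk measurable_fst))
  have hFs : Measurable Fs := by
    apply Measurable.sub
    apply Measurable.add
    exact (hpd.comp measurable_fst).log.sub (hpd.comp measurable_snd).log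
    exact (hpn.comp (measurable_fst.prodMk measurable_snd)).log
    exact (hpn.comp (measurable_snd.prodMk measurable_fst)).log
  have hFt : Measurable Ft := by
    apply Measurable.sub
    apply Measurable.add
    exact (hpθ.comp measurable_fst).log.sub (hpθ.comp measurable_snd).log
    exact (hpn.comp (measurable_fst.prodMk measurable_snd)).log
    exact (hpn.comp (measurable_snd.prodMk measurable_fst)).log
  -- integrability of densities
  have hpd_int : Integrable pd μ := by
    by_contra h; rw [integral_undef h] at hpdint; norm_num at hpdint
  have hpn_int : ∀ x, Integrable (fun y => pn (x, y)) μ := by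
    intro x
    by_contra h
    have := hpnint x
    rw [integral_undef h] at this
    norm_num at this
  -- ∫⁻ ofReal pd = 1
  have hpd_lint : ∫⁻ x, ENNReal.ofReal (pd x) ∂μ = 1 := by
    rw [← ofReal_integral_eq_lintegral_ofReal hpd_int (ae_of_all _ fun x => (hpdpos x).le),
      hpdint, ENNReal.ofReal_one]
  have hpn_lint : ∀ x, ∫⁻ y, ENNReal.ofReal (pn (x, y)) ∂μ = 1 := by
    intro x
    rw [← ofReal_integral_eq_lintegral_ofReal (hpn_int x) (ae_of_all _ fun y => (hpnpos _).le),
      hpnint x, ENNReal.ofReal_one]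
  -- ∫⁻ ofReal A = 1
  have hA_lint : ∫⁻ z, ENNReal.ofReal (A z) ∂ν = 1 := by
    rw [hν, lintegral_prod (fun z => ENNReal.ofReal (A z)) (ENNReal.measurable_ofReal.comp hA).aemeasurable]
    have : ∀ x, ∫⁻ y, ENNReal.ofReal (A (x, y)) ∂μ = ENNReal.ofReal (pd x) := by
      intro x
      calc ∫⁻ y, ENNReal.ofReal (A (x, y)) ∂μ
          = ∫⁻ y, ENNReal.ofReal (pd x) * ENNReal.ofReal (pn (x, y)) ∂μ := by
            simp only [hAdef]
            exact lintegral_congr fun y => ENNReal.ofReal_mul (hpdpos x).le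
        _ = ENNReal.ofReal (pd x) * ∫⁻ y, ENNReal.ofReal (pn (x, y)) ∂μ :=
            lintegral_const_mul _ (ENNReal.measurable_ofReal.comp
              (hpn.comp (measurable_prodMk_left)))
        _ = ENNReal.ofReal (pd x) := by rw [hpn_lint x, mul_one]
    rw [lintegral_congr this, hpd_lint]
  have hB_lint : ∫⁻ z, ENNReal.ofReal (Bf z) ∂ν = 1 := by
    have hswap : ∀ z : Ω × Ω, Bf z = A (Prod.swap z) := fun z => rfl
    calc ∫⁻ z, ENNReal.ofReal (Bf z) ∂ν
        = ∫⁻ z, ENNReal.ofReal (A (Prod.swap z)) ∂ν := lintegral_congr fun z => by rw [hswap]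
      _ = ∫⁻ z, ENNReal.ofReal (A z) ∂(ν.map Prod.swap) :=
          (lintegral_map (ENNReal.measurable_ofReal.comp hA) measurable_swap).symm
      _ = ∫⁻ z, ENNReal.ofReal (A z) ∂ν := by rw [hν, Measure.prod_swap]
      _ = 1 := hA_lint
  -- Loss as single lintegral
  have loss_eq : ∀ F : Ω × Ω → ℝ, Measurable F →
      logisticLoss ν A Bf F = ∫⁻ z, ENNReal.ofReal (ell (A z) (Bf z) (F z)) ∂ν := by
    intro F hF
    have hm1 : Measurable fun z => ENNReal.ofReal (-(A z * Real.log (sigmoid (F z)))) :=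
      ENNReal.measurable_ofReal.comp
        ((hA.mul ((continuous_sigmoid_loc.measurable.comp hF).log)).neg)
    unfold logisticLoss
    rw [← lintegral_add_left hm1]
    refine lintegral_congr fun z => ?_
    unfold ell
    rw [ENNReal.ofReal_add
      (part_nonneg _ _ (hApos z).le (sigmoid_pos _) (sigmoid_lt_one _).le)
      (part_nonneg _ _ (hBpos z).le (by linarith [sigmoid_lt_one (F z)])
        (by linarith [sigmoid_pos (F z)]))]
  -- define combined integrands
  set g : Ω × Ω → ℝ≥0∞ := fun z => ENNReal.ofReal (ell (A z) (Bf z) (Ft z)) with hgdef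
  set gs : Ω × Ω → ℝ≥0∞ := fun z => ENNReal.ofReal (ell (A z) (Bf z) (Fs z)) with hgsdef
  have hell_meas : ∀ (F : Ω × Ω → ℝ), Measurable F →
      Measurable fun z => ENNReal.ofReal (ell (A z) (Bf z) (F z)) := by
    intro F hF
    apply ENNReal.measurable_ofReal.comp
    unfold ell
    exact ((hA.mul ((continuous_sigmoid_loc.measurable.comp hF).log)).neg).add
      ((hB.mul ((measurable_const.sub (continuous_sigmoid_loc.measurable.comp hF)).log)).neg)
  have hg : Measurable g := hell_meas Ft hFt
  have hgs : Measurable gs := hell_meas Fs hFs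
  -- pointwise domination
  have hpt : ∀ z, gs z ≤ g z := by
    intro z
    apply ENNReal.ofReal_le_ofReal
    rw [hFs_eq z]
    exact ell_le _ _ _ (hApos z) (hBpos z)
  -- finiteness of ∫⁻ gs
  have hgs_fin : ∫⁻ z, gs z ∂ν ≠ ⊤ := by
    have hb : ∀ z, gs z ≤ ENNReal.ofReal (Bf z) + ENNReal.ofReal (A z) := by
      intro z
      simp only [hgsdef]
      unfold ell
      rw [← ENNReal.ofReal_add (hBpos z).le (hApos z).le]
      apply ENNReal.ofReal_le_ofReal
      have b1 : -(A z * Real.log (sigmoid (Fs z))) ≤ Bf z := by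
        rw [hFs_eq z]; exact part1_bound _ _ (hApos z) (hBpos z)
      have b2 : -(Bf z * Real.log (1 - sigmoid (Fs z))) ≤ A z := by
        rw [hFs_eq z]; exact part2_bound _ _ (hApos z) (hBpos z)
      linarith
    have : ∫⁻ z, gs z ∂ν ≤ 2 := by
      calc ∫⁻ z, gs z ∂ν ≤ ∫⁻ z, (ENNReal.ofReal (Bf z) + ENNReal.ofReal (A z)) ∂ν :=
            lintegral_mono hb
        _ = (∫⁻ z, ENNReal.ofReal (Bf z) ∂ν) + ∫⁻ z, ENNReal.ofReal (A z) ∂ν :=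
            lintegral_add_left (ENNReal.measurable_ofReal.comp hB) _
        _ = 2 := by rw [hA_lint, hB_lint]; norm_num
    exact (this.trans_lt (by norm_num)).ne
  -- optimality gives reverse integral inequality
  have hle : ∫⁻ z, g z ∂ν ≤ ∫⁻ z, gs z ∂ν := by
    have := hopt Fs hFs
    rwa [loss_eq Fs hFs, loss_eq Ft hFt] at this
  have heq : ∫⁻ z, g z ∂ν = ∫⁻ z, gs z ∂ν :=
    le_antisymm hle (lintegral_mono hpt)
  -- conclude a.e. equality of integrands
  have hsub : ∫⁻ z, (g z - gs z) ∂ν = 0 := by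
    rw [lintegral_sub hgs hgs_fin (ae_of_all _ hpt), heq, tsub_self]
  have hzero : ∀ᵐ z ∂ν, g z - gs z = 0 :=
    (lintegral_eq_zero_iff (hg.sub hgs)).mp hsub
  have haeeq : ∀ᵐ z ∂ν, Ft z = Fs z := by
    filter_upwards [hzero] with z hz
    have h1 : g z ≤ gs z := tsub_eq_zero_iff_le.mp hz
    have h2 : ell (A z) (Bf z) (Ft z) ≤ ell (A z) (Bf z) (Fs z) := by
      rw [hgdef, hgsdef] at h1
      exact (ENNReal.ofReal_le_ofReal_iff (ell_nonneg _ _ _ (hApos z).le (hBpos z).le)).mp h1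
    by_contra hne
    have hlt := ell_lt (A z) (Bf z) (Ft z) (hApos z) (hBpos z) (by rw [← hFs_eq z]; exact hne)
    rw [← hFs_eq z] at hlt
    linarith
  -- reduce to f x = f y a.e.
  have haef : ∀ᵐ z ∂ν, Real.log (pθ z.1) - Real.log (pd z.1)
      = Real.log (pθ z.2) - Real.log (pd z.2) := by
    filter_upwards [haeeq] with z hz
    simp only [hFtdef, hFsdef] at hz
    linarith
  have hae2 : ∀ᵐ x ∂μ, ∀ᵐ y ∂μ, Real.log (pθ x) - Real.log (pd x)
      = Real.log (pθ y) - Real.log (pd y) := Measure.ae_ae_of_ae_prod haef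
  have hμ : μ ≠ 0 := by
    intro h0
    rw [h0] at hpdint
    simp at hpdint
  have : (MeasureTheory.ae μ).NeBot := ae_neBot.mpr hμ
  obtain ⟨x₀, hx₀⟩ := hae2.exists
  set c := Real.log (pθ x₀) - Real.log (pd x₀) with hcdef
  have haepθ : ∀ᵐ y ∂μ, pθ y = Real.exp c * pd y := by
    filter_upwards [hx₀] with y hy
    have hlog : Real.log (pθ y) = Real.log (pd y) + c := by rw [hcdef]; linarith
    calc pθ y = Real.exp (Real.log (pθ y)) := (Real.exp_log (hpθpos y)).symm
      _ = Real.exp (Real.log (pd y) + c) := by rw [hlog]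
      _ = Real.exp c * pd y := by rw [Real.exp_add, Real.exp_log (hpdpos y)]; ring
  have hec : Real.exp c = 1 := by
    have : ∫ y, pθ y ∂μ = Real.exp c := by
      rw [integral_congr_ae haepθ, integral_const_mul, hpdint, mul_one]
    rw [← this, hpθint]
  have hc0 : c = 0 := (Real.exp_eq_one_iff c).mp hec
  filter_upwards [haepθ] with y hy
  rw [hy, hc0, Real.exp_zero, one_mul]
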